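/- Let Ξ be a minimal subshift over alphabet A and g : Ξ → ℝ the function g(u) = 𝟙[u_0 = a] - f for a letter a and real f. If the language of Ξ is finitely balanced for a with frequency f (every length-n word has between nf - C and nf + C occurrences of a), then the Birkhoff sums Σ_{k=0}^{n-1} g(σᵏ u) are bounded uniformly in n and u, and hence (by Gottschalk–Hedlund) g is a continuous coboundary: g = h∘σ - h for some continuous h : Ξ → ℝ. -/

import Mathlib

set_option linter.unusedSectionVars false
set_option maxHeartbeats 1000000

namespace Stmt13Aux

variable {A : Type*}

/-- left shift -/
def sL : (ℤ → A) → (ℤ → A) := fun u n => u (n + 1)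
/-- right shift -/
def sR : (ℤ → A) → (ℤ → A) := fun u n => u (n - 1)

lemma sL_iter (k : ℕ) (u : ℤ → A) (j : ℤ) : (sL^[k] u) j = u (j + k) := by
  induction k generalizing u j with
  | zero => simp
  | succ k ih =>
    rw [Function.iterate_succ_apply, ih]
    show u ((j + k) + 1) = _
    congr 1; push_cast; ring

lemma sR_iter (k : ℕ) (u : ℤ → A) (j : ℤ) : (sR^[k] u) j = u (j - k) := by
  induction k generalizing u j with
  | zero => simp
  | succ k ih =>
    rw [Function.iterate_succ_apply, ih]
    show u ((j - k) - 1) = _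
    congr 1; push_cast; ring

variable [DecidableEq A] (a : A) (f : ℝ)

/-- the cocycle -/
def gf (a : A) (f : ℝ) : (ℤ → A) → ℝ := fun u => (if u 0 = a then (1:ℝ) else 0) - f

/-- Birkhoff sums -/
def Sb (a : A) (f : ℝ) (n : ℕ) (u : ℤ → A) : ℝ :=
  ∑ k ∈ Finset.range n, gf a f (sL^[k] u)

lemma Sb_zero (u : ℤ → A) : Sb a f 0 u = 0 := Finset.sum_range_zero _

lemma Sb_succ (n : ℕ) (u : ℤ → A) :
    Sb a f (n + 1) u = Sb a f n u + gf a f (sL^[n] u) :=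
  Finset.sum_range_succ _ _

lemma Sb_succ' (n : ℕ) (u : ℤ → A) :
    Sb a f (n + 1) u = Sb a f n (sL u) + gf a f u := by
  have := Finset.sum_range_succ' (fun k => gf a f (sL^[k] u)) n
  simpa [Sb, Function.iterate_succ_apply] using this

/-- skew product -/
def Tm (a : A) (f : ℝ) : ((ℤ → A) × ℝ) → ((ℤ → A) × ℝ) :=
  fun p => (sL p.1, p.2 + gf a f p.1)

def Tm' (a : A) (f : ℝ) : ((ℤ → A) × ℝ) → ((ℤ → A) × ℝ) :=
  fun p => (sR p.1, p.2 - gf a f (sR p.1))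

lemma sL_sR (u : ℤ → A) : sL (sR u) = u := by
  funext j; show u ((j + 1) - 1) = u j; congr 1; ring

lemma sR_sL (u : ℤ → A) : sR (sL u) = u := by
  funext j; show u ((j - 1) + 1) = u j; congr 1; ring

lemma sL_iter_sR_iter (m : ℕ) (u : ℤ → A) : sL^[m] (sR^[m] u) = u := by
  funext j; rw [sL_iter, sR_iter]; congr 1; ring

variable [TopologicalSpace A] [DiscreteTopology A]

lemma sL_cont : Continuous (sL (A := A)) :=
  continuous_pi fun n => continuous_apply (n + 1)

lemma sR_cont : Continuous (sR (A := A)) :=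
  continuous_pi fun n => continuous_apply (n - 1)

lemma gf_cont : Continuous (gf a f) := by
  have h1 : Continuous fun b : A => if b = a then (1:ℝ) else 0 :=
    continuous_of_discreteTopology
  exact (h1.comp (continuous_apply 0)).sub continuous_const

lemma Sb_cont (n : ℕ) : Continuous (Sb a f n) := by
  apply continuous_finset_sum
  intro k _
  exact (gf_cont a f).comp (sL_cont.iterate k)

end Stmt13Aux

open Stmt13Aux

/-- For a minimal subshift `Ξ` whose language is finitely balanced for the
letter `a` with frequency `f`, the Birkhoff sums of
`g(u) = 𝟙[u 0 = a] - f` along the shift are uniformly bounded, and hence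
(by Gottschalk–Hedlund) `g` is a continuous coboundary on `Ξ`. -/
theorem stmt13 {A : Type*} [Fintype A] [DecidableEq A]
    [TopologicalSpace A] [DiscreteTopology A]
    (Ξ : Set (ℤ → A)) (hne : Ξ.Nonempty) (hclosed : IsClosed Ξ)
    (hshift : ∀ u ∈ Ξ, (fun n => u (n + 1)) ∈ Ξ)
    (hshift' : ∀ u ∈ Ξ, (fun n => u (n - 1)) ∈ Ξ)
    (hmin : ∀ u ∈ Ξ, ∀ v ∈ Ξ, v ∈ closure {w : ℤ → A | ∃ m : ℤ, w = fun k => u (k + m)})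
    (a : A) (f C : ℝ)
    (hbal : ∀ u ∈ Ξ, ∀ (m : ℤ) (n : ℕ),
      |(((List.range n).filter (fun k => u (m + k) = a)).length : ℝ) - (n : ℝ) * f| ≤ C) :
    (∀ u ∈ Ξ, ∀ n : ℕ,
      |∑ k ∈ Finset.range n, ((if u (k : ℤ) = a then (1 : ℝ) else 0) - f)| ≤ C) ∧
    ∃ h : (ℤ → A) → ℝ, ContinuousOn h Ξ ∧
      ∀ u ∈ Ξ, (if u 0 = a then (1 : ℝ) else 0) - f = h (fun n => u (n + 1)) - h u := by
  classical
  obtain ⟨u₀, hu₀⟩ := hne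
  -- counting identity
  have sum_count : ∀ (u : ℤ → A) (m : ℤ) (n : ℕ),
      ∑ k ∈ Finset.range n, ((if u (m + (k:ℤ)) = a then (1:ℝ) else 0) - f)
        = (((List.range n).filter (fun k => u (m + k) = a)).length : ℝ) - (n:ℝ) * f := by
    intro u m n
    induction n with
    | zero => simp
    | succ n ih =>
      rw [Finset.sum_range_succ, ih, List.range_succ]
      by_cases hc : u (m + (n:ℤ)) = a <;> simp [hc] <;> push_cast <;> ring
  have key : ∀ u ∈ Ξ, ∀ (m : ℤ) (n : ℕ),
      |∑ k ∈ Finset.range n, ((if u (m + (k:ℤ)) = a then (1:ℝ) else 0) - f)| ≤ C := by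
    intro u hu m n
    rw [sum_count]
    exact hbal u hu m n
  have part1 : ∀ u ∈ Ξ, ∀ n : ℕ,
      |∑ k ∈ Finset.range n, ((if u (k : ℤ) = a then (1 : ℝ) else 0) - f)| ≤ C := by
    intro u hu n
    have := key u hu 0 n
    simpa using this
  refine ⟨part1, ?_⟩
  -- identification of Birkhoff sums
  have Sb_eq : ∀ (u : ℤ → A) (n : ℕ),
      Sb a f n u = ∑ k ∈ Finset.range n, ((if u ((0:ℤ) + (k:ℤ)) = a then (1:ℝ) else 0) - f) := by
    intro u n
    refine Finset.sum_congr rfl fun k _ => ?_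
    simp [gf, sL_iter]
  have SbR_eq : ∀ (u : ℤ → A) (n : ℕ),
      Sb a f n (sR^[n] u)
        = ∑ k ∈ Finset.range n, ((if u (-(n:ℤ) + (k:ℤ)) = a then (1:ℝ) else 0) - f) := by
    intro u n
    refine Finset.sum_congr rfl fun k _ => ?_
    have h0 : (sL^[k] (sR^[n] u)) 0 = u (-(n:ℤ) + (k:ℤ)) := by
      rw [sL_iter, sR_iter]; congr 1; ring
    simp [gf, h0]
  have SbBound : ∀ u ∈ Ξ, ∀ n : ℕ, |Sb a f n u| ≤ C := by
    intro u hu n; rw [Sb_eq]; exact key u hu 0 n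
  have SbRBound : ∀ u ∈ Ξ, ∀ n : ℕ, |Sb a f n (sR^[n] u)| ≤ C := by
    intro u hu n; rw [SbR_eq]; exact key u hu (-(n:ℤ)) n
  have memΞ_sL : ∀ u ∈ Ξ, sL u ∈ Ξ := fun u hu => hshift u hu
  have memΞ_sR : ∀ u ∈ Ξ, sR u ∈ Ξ := fun u hu => hshift' u hu
  -- the compact invariant box
  set W : Set ((ℤ → A) × ℝ) :=
    {p | p.1 ∈ Ξ ∧ (∀ n : ℕ, |p.2 + Sb a f n p.1| ≤ C)
       ∧ (∀ n : ℕ, |p.2 - Sb a f n (sR^[n] p.1)| ≤ C)} with hWdef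
  have hWmem : (u₀, (0:ℝ)) ∈ W := by
    refine ⟨hu₀, fun n => ?_, fun n => ?_⟩
    · simpa using SbBound u₀ hu₀ n
    · simpa [abs_sub_comm] using SbRBound u₀ hu₀ n
  have hWclosed : IsClosed W := by
    have h1 : IsClosed {p : (ℤ → A) × ℝ | p.1 ∈ Ξ} := hclosed.preimage continuous_fst
    have h2 : IsClosed {p : (ℤ → A) × ℝ | ∀ n : ℕ, |p.2 + Sb a f n p.1| ≤ C} := by
      rw [Set.setOf_forall]
      refine isClosed_iInter fun n => isClosed_le ?_ continuous_const
      exact (continuous_snd.add ((Sb_cont a f n).comp continuous_fst)).abs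
    have h3 : IsClosed {p : (ℤ → A) × ℝ | ∀ n : ℕ, |p.2 - Sb a f n (sR^[n] p.1)| ≤ C} := by
      rw [Set.setOf_forall]
      refine isClosed_iInter fun n => isClosed_le ?_ continuous_const
      exact (continuous_snd.sub
        ((Sb_cont a f n).comp ((sR_cont.iterate n).comp continuous_fst))).abs
    have : W = {p : (ℤ → A) × ℝ | p.1 ∈ Ξ}
        ∩ ({p : (ℤ → A) × ℝ | ∀ n : ℕ, |p.2 + Sb a f n p.1| ≤ C}
          ∩ {p : (ℤ → A) × ℝ | ∀ n : ℕ, |p.2 - Sb a f n (sR^[n] p.1)| ≤ C}) := by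
      ext p; simp [hWdef, and_assoc]
    rw [this]
    exact h1.inter (h2.inter h3)
  have hWsub : W ⊆ Ξ ×ˢ Set.Icc (-C) C := by
    rintro ⟨u, t⟩ ⟨h1, h2, -⟩
    have := h2 0
    rw [Sb_zero, add_zero] at this
    exact ⟨h1, by simpa [Set.mem_Icc] using abs_le.mp this⟩
  have hΞcomp : IsCompact Ξ := hclosed.isCompact
  have hWcomp : IsCompact W :=
    (hΞcomp.prod isCompact_Icc).of_isClosed_subset hWclosed hWsub
  -- invariance of W
  have hWT : Set.MapsTo (Tm a f) W W := by
    rintro ⟨u, t⟩ ⟨h1, h2, h3⟩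
    refine ⟨memΞ_sL u h1, fun n => ?_, fun n => ?_⟩
    · show |(t + gf a f u) + Sb a f n (sL u)| ≤ C
      have e : (t + gf a f u) + Sb a f n (sL u) = t + Sb a f (n + 1) u := by
        rw [Sb_succ']; ring
      rw [e]; exact h2 (n + 1)
    · show |(t + gf a f u) - Sb a f n (sR^[n] (sL u))| ≤ C
      cases n with
      | zero =>
        rw [Function.iterate_zero_apply, Sb_zero, sub_zero]
        have := h2 1
        rw [Sb_succ', Sb_zero, zero_add] at this
        exact this
      | succ m =>
        have e1 : sR^[m + 1] (sL u) = sR^[m] u := by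
          funext j
          rw [sR_iter, sR_iter]
          show u ((j - ((m:ℤ) + 1)) + 1) = u (j - (m:ℤ))
          congr 1; push_cast; ring
        rw [e1, Sb_succ, sL_iter_sR_iter]
        have e2 : (t + gf a f u) - (Sb a f m (sR^[m] u) + gf a f u)
            = t - Sb a f m (sR^[m] u) := by ring
        rw [e2]; exact h3 m
  have hWT' : Set.MapsTo (Tm' a f) W W := by
    rintro ⟨u, t⟩ ⟨h1, h2, h3⟩
    refine ⟨memΞ_sR u h1, fun n => ?_, fun n => ?_⟩
    · show |(t - gf a f (sR u)) + Sb a f n (sR u)| ≤ C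
      cases n with
      | zero =>
        rw [Sb_zero, add_zero]
        have := h3 1
        rw [Sb_succ, Sb_zero, Function.iterate_zero_apply, zero_add,
          Function.iterate_one] at this
        exact this
      | succ m =>
        rw [Sb_succ', sL_sR]
        have e : (t - gf a f (sR u)) + (Sb a f m u + gf a f (sR u)) = t + Sb a f m u := by ring
        rw [e]; exact h2 m
    · show |(t - gf a f (sR u)) - Sb a f n (sR^[n] (sR u))| ≤ C
      have e1 : sR^[n] (sR u) = sR^[n + 1] u := (Function.iterate_succ_apply sR n u).symm
      rw [e1]
      have e2 : sL^[n] (sR^[n + 1] u) = sR u := by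
        funext j
        rw [sL_iter, sR_iter]
        congr 1; push_cast; ring
      have h3n := h3 (n + 1)
      rw [Sb_succ, e2] at h3n
      have e3 : (t - gf a f (sR u)) - Sb a f n (sR^[n + 1] u)
          = t - (Sb a f n (sR^[n + 1] u) + gf a f (sR u)) := by ring
      rw [e3]; exact h3n
  -- minimal invariant compact subset via Zorn
  set 𝒮 : Set (Set ((ℤ → A) × ℝ)) :=
    {K | K ⊆ W ∧ K.Nonempty ∧ IsClosed K ∧ Set.MapsTo (Tm a f) K K
       ∧ Set.MapsTo (Tm' a f) K K} with h𝒮def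
  have hWS : W ∈ 𝒮 := ⟨subset_rfl, ⟨_, hWmem⟩, hWclosed, hWT, hWT'⟩
  have hchain : ∀ c ⊆ 𝒮, IsChain (· ⊆ ·) c → c.Nonempty → ∃ lb ∈ 𝒮, ∀ s ∈ c, lb ⊆ s := by
    intro c hc hch hcne
    refine ⟨⋂₀ c, ⟨?_, ?_, ?_, ?_, ?_⟩, fun s hs => Set.sInter_subset_of_mem hs⟩
    · obtain ⟨s, hs⟩ := hcne
      exact (Set.sInter_subset_of_mem hs).trans (hc hs).1
    · haveI : Nonempty c := hcne.to_subtype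
      apply IsCompact.nonempty_sInter_of_directed_nonempty_isCompact_isClosed
      · intro x hx y hy
        rcases eq_or_ne x y with rfl | hne'
        · exact ⟨x, hx, subset_rfl, subset_rfl⟩
        · rcases hch hx hy hne' with hxy | hxy
          · exact ⟨x, hx, subset_rfl, hxy⟩
          · exact ⟨y, hy, hxy, subset_rfl⟩
      · exact fun U hU => (hc hU).2.1
      · exact fun U hU => hWcomp.of_isClosed_subset (hc hU).2.2.1 (hc hU).1
      · exact fun U hU => (hc hU).2.2.1
    · exact isClosed_sInter fun U hU => (hc hU).2.2.1
    · intro p hp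
      rw [Set.mem_sInter] at hp ⊢
      exact fun s hs => (hc hs).2.2.2.1 (hp s hs)
    · intro p hp
      rw [Set.mem_sInter] at hp ⊢
      exact fun s hs => (hc hs).2.2.2.2 (hp s hs)
  obtain ⟨K, -, hKmin⟩ := zorn_superset_nonempty 𝒮 hchain W hWS
  obtain ⟨hKW, hKne, hKcl, hKT, hKT'⟩ := hKmin.prop
  have hKcomp : IsCompact K := hWcomp.of_isClosed_subset hKcl hKW
  have hKmin' : ∀ K' ∈ 𝒮, K' ⊆ K → K ⊆ K' := fun K' h1 h2 => hKmin.2 h1 h2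
  have hC0 : ∀ p ∈ K, |p.2| ≤ C := by
    intro p hp
    have := (hKW hp).2.1 0
    rwa [Sb_zero, add_zero] at this
  -- K is a graph
  have graph : ∀ x t s, (x, t) ∈ K → (x, s) ∈ K → t = s := by
    intro x t s ht hs
    by_contra hts
    set c := s - t with hcdef
    have hc0 : c ≠ 0 := sub_ne_zero.mpr fun h => hts h.symm
    set K' : Set ((ℤ → A) × ℝ) :=
      K ∩ (fun p : (ℤ → A) × ℝ => (p.1, p.2 - c)) ⁻¹' K with hK'def
    have hK'S : K' ∈ 𝒮 := by
      refine ⟨Set.inter_subset_left.trans hKW, ⟨(x, s), hs, ?_⟩, ?_, ?_, ?_⟩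
      · show (x, s - c) ∈ K
        have : s - c = t := by rw [hcdef]; ring
        rwa [this]
      · exact hKcl.inter (hKcl.preimage
          (continuous_fst.prodMk (continuous_snd.sub continuous_const)))
      · rintro ⟨u, r⟩ ⟨hp1, hp2⟩
        refine ⟨hKT hp1, ?_⟩
        show (sL u, (r + gf a f u) - c) ∈ K
        have hmem := hKT hp2
        have e : (sL u, (r - c) + gf a f u) = (sL u, (r + gf a f u) - c) := by
          rw [Prod.mk.injEq]; exact ⟨rfl, by ring⟩
        exact e ▸ hmem
      · rintro ⟨u, r⟩ ⟨hp1, hp2⟩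
        refine ⟨hKT' hp1, ?_⟩
        show (sR u, (r - gf a f (sR u)) - c) ∈ K
        have hmem := hKT' hp2
        have e : (sR u, (r - c) - gf a f (sR u)) = (sR u, (r - gf a f (sR u)) - c) := by
          rw [Prod.mk.injEq]; exact ⟨rfl, by ring⟩
        exact e ▸ hmem
    have hsub : K ⊆ K' := hKmin' K' hK'S Set.inter_subset_left
    have step : ∀ p ∈ K, (p.1, p.2 - c) ∈ K := fun p hp => (hsub hp).2
    have iter : ∀ n : ℕ, (x, s - n * c) ∈ K := by
      intro n
      induction n with
      | zero => simpa using hs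
      | succ n ih =>
        have := step _ ih
        have e : ((x, s - (n:ℝ) * c).1, (x, s - (n:ℝ) * c).2 - c)
            = (x, s - ((n:ℕ) + 1 : ℕ) * c) := by
          rw [Prod.mk.injEq]
          refine ⟨rfl, ?_⟩
          push_cast; ring
        rwa [e] at this
    obtain ⟨n, hn⟩ := exists_nat_gt ((|s| + C) / |c|)
    have hcpos : 0 < |c| := abs_pos.mpr hc0
    have h1 : |s| + C < n * |c| := (div_lt_iff₀ hcpos).mp hn
    have h2 := hC0 _ (iter n)
    have h3 : |(n:ℝ) * c| - |s| ≤ |s - (n:ℝ) * c| := by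
      have := abs_sub_abs_le_abs_sub ((n:ℝ) * c) s
      rwa [abs_sub_comm] at this
    rw [abs_mul, Nat.abs_cast] at h3
    simp only at h2
    linarith
  -- projection of K is all of Ξ
  set P : Set (ℤ → A) := Prod.fst '' K with hPdef
  have hPsub : P ⊆ Ξ := by rintro _ ⟨p, hp, rfl⟩; exact (hKW hp).1
  have hPne : P.Nonempty := hKne.image _
  have hPcl : IsClosed P := (hKcomp.image continuous_fst).isClosed
  have hPsL : ∀ u ∈ P, sL u ∈ P := by
    rintro _ ⟨p, hp, rfl⟩; exact ⟨_, hKT hp, rfl⟩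
  have hPsR : ∀ u ∈ P, sR u ∈ P := by
    rintro _ ⟨p, hp, rfl⟩; exact ⟨_, hKT' hp, rfl⟩
  have hPiter : ∀ k : ℕ, ∀ u ∈ P, sL^[k] u ∈ P ∧ sR^[k] u ∈ P := by
    intro k
    induction k with
    | zero =>
      intro u hu
      simp only [Function.iterate_zero_apply]
      exact ⟨hu, hu⟩
    | succ k ih =>
      intro u hu
      rw [Function.iterate_succ_apply', Function.iterate_succ_apply']
      exact ⟨hPsL _ (ih u hu).1, hPsR _ (ih u hu).2⟩
  have hPΞ : Ξ ⊆ P := by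
    obtain ⟨u₁, hu₁P⟩ := hPne
    intro v hv
    have horb : {w : ℤ → A | ∃ m : ℤ, w = fun k => u₁ (k + m)} ⊆ P := by
      rintro w ⟨m, rfl⟩
      rcases le_or_gt 0 m with hm | hm
      · have e : (fun k => u₁ (k + m)) = sL^[m.toNat] u₁ := by
          funext j; rw [sL_iter]; congr 1; rw [Int.toNat_of_nonneg hm]
        rw [e]; exact (hPiter _ _ hu₁P).1
      · have e : (fun k => u₁ (k + m)) = sR^[(-m).toNat] u₁ := by
          funext j; rw [sR_iter]; congr 1; omega
        rw [e]; exact (hPiter _ _ hu₁P).2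
    exact (closure_minimal horb hPcl) (hmin u₁ (hPsub hu₁P) v hv)
  have hEx : ∀ u ∈ Ξ, ∃ t, (u, t) ∈ K := by
    intro u hu
    have hmem := hPΞ hu
    rw [hPdef] at hmem
    obtain ⟨p, hp, he⟩ := hmem
    refine ⟨p.2, ?_⟩
    have : (u, p.2) = p := by rw [← he]
    rw [this]; exact hp
  set h : (ℤ → A) → ℝ :=
    fun u => if hu : ∃ t, (u, t) ∈ K then hu.choose else 0 with hhdef
  have hmemK : ∀ u ∈ Ξ, (u, h u) ∈ K := by
    intro u hu
    have hx := hEx u hu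
    show (u, dite _ _ _) ∈ K
    rw [dif_pos hx]
    exact hx.choose_spec
  have huniq : ∀ u t, u ∈ Ξ → (u, t) ∈ K → h u = t :=
    fun u t hu ht => graph u (h u) t (hmemK u hu) ht
  refine ⟨h, ?_, ?_⟩
  · -- continuity of h on Ξ
    haveI : CompactSpace ↥K := isCompact_iff_compactSpace.mp hKcomp
    let e : ↥K ≃ ↥Ξ :=
      { toFun := fun p => ⟨p.val.1, (hKW p.prop).1⟩
        invFun := fun u => ⟨(u.val, h u.val), hmemK u.val u.prop⟩
        left_inv := by
          rintro ⟨⟨u, t⟩, hp⟩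
          apply Subtype.ext
          show (u, h u) = (u, t)
          rw [huniq u t (hKW hp).1 hp]
        right_inv := fun u => rfl }
    have hecont : Continuous e :=
      Continuous.subtype_mk (continuous_fst.comp continuous_subtype_val) _
    let homeo := hecont.homeoOfEquivCompactToT2
    rw [continuousOn_iff_continuous_restrict]
    have e2 : Set.domRestrict Ξ h = (fun p : ↥K => p.val.2) ∘ homeo.symm := by
      funext u; rfl
    rw [e2]
    exact (continuous_snd.comp continuous_subtype_val).comp homeo.symm.continuous
  · intro u hu
    have h1 : (sL u, h u + gf a f u) ∈ K := hKT (hmemK u hu)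
    have h2 := huniq (sL u) (h u + gf a f u) (hshift u hu) h1
    show gf a f u = h (sL u) - h u
    rw [h2]; ring
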